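/- Let (Ω, ℱ, μ) be a probability space, E a measurable space, Z an E-valued random variable, δ > 0 and C > 0. Let g, φ : E → ℝ be measurable with |φ(x) − g(x)| ≤ δ for all x ∈ E, and suppose the cumulative distribution function F of g(Z), F(t) := μ(g(Z) ≤ t), is C-Lipschitz: |F(a) − F(b)| ≤ C|a − b| for all a, b ∈ ℝ. Then for every x ∈ E: E[ |1{φ(Z) < φ(x)} − 1{g(Z) < g(x)}| ] ≤ 4Cδ. -/

import Mathlib

open MeasureTheory

/-- Probabilistic bound used in Lemma B.1(i): if `φ` is uniformly within `δ` of `g` and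
the cdf of `g(Z)` is `C`-Lipschitz, then the expected absolute difference of rank
indicators is at most `4Cδ`. -/
theorem stmt_13 {Ω E : Type*} [MeasurableSpace Ω] [MeasurableSpace E]
    (μ : Measure Ω) [IsProbabilityMeasure μ]
    (Z : Ω → E) (hZ : Measurable Z)
    (δ C : ℝ) (hδ : 0 < δ) (hC : 0 < C)
    (g φ : E → ℝ) (hg : Measurable g) (hφ : Measurable φ)
    (hclose : ∀ x : E, |φ x - g x| ≤ δ)
    (F : ℝ → ℝ) (hF : ∀ t : ℝ, F t = (μ {ω | g (Z ω) ≤ t}).toReal)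
    (hLip : ∀ a b : ℝ, |F a - F b| ≤ C * |a - b|) :
    ∀ x : E,
      ∫ ω, |(if φ (Z ω) < φ x then (1 : ℝ) else 0)
          - (if g (Z ω) < g x then (1 : ℝ) else 0)| ∂μ
        ≤ 4 * C * δ := by
  intro x
  refine le_of_forall_pos_le_add (fun ε hε => ?_)
  set a : ℝ := g x with ha
  set ε' : ℝ := ε / C with hε'
  have hε'pos : 0 < ε' := div_pos hε hC
  -- the "bad" set
  set s : Set Ω := {ω | g (Z ω) ∈ Set.Ioc (a - 2*δ - ε') (a + 2*δ)} with hs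
  have hsmeas : MeasurableSet s := (hg.comp hZ) measurableSet_Ioc
  have hAmeas : ∀ t : ℝ, MeasurableSet {ω | g (Z ω) ≤ t} := fun t =>
    (hg.comp hZ) measurableSet_Iic
  -- pointwise bound by the indicator of s
  have hpt : ∀ ω, |(if φ (Z ω) < φ x then (1 : ℝ) else 0)
      - (if g (Z ω) < g x then (1 : ℝ) else 0)|
      ≤ s.indicator (fun _ => (1 : ℝ)) ω := by
    intro ω
    have h1 := abs_le.mp (hclose (Z ω))
    have h2 := abs_le.mp (hclose x)
    by_cases hφc : φ (Z ω) < φ x <;> by_cases hgc : g (Z ω) < g x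
    · simp [hφc, hgc, Set.indicator_apply]
      split <;> norm_num
    · have hmem : ω ∈ s := by
        constructor
        · have : a ≤ g (Z ω) := not_lt.mp hgc
          linarith
        · linarith
      simp [hφc, hgc, Set.indicator_of_mem hmem]
    · have hmem : ω ∈ s := by
        constructor
        · have : φ x ≤ φ (Z ω) := not_lt.mp hφc
          linarith
        · linarith
      simp [hφc, hgc, Set.indicator_of_mem hmem]
    · simp [hφc, hgc, Set.indicator_apply]
      split <;> norm_num
  -- integral bound
  have hint : Integrable (s.indicator (fun _ => (1 : ℝ))) μ :=
    (integrable_const (1 : ℝ)).indicator hsmeas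
  have hle : ∫ ω, |(if φ (Z ω) < φ x then (1 : ℝ) else 0)
      - (if g (Z ω) < g x then (1 : ℝ) else 0)| ∂μ
      ≤ ∫ ω, s.indicator (fun _ => (1 : ℝ)) ω ∂μ :=
    integral_mono_of_nonneg (Filter.Eventually.of_forall fun ω => abs_nonneg _)
      hint (Filter.Eventually.of_forall hpt)
  have hind : ∫ ω, s.indicator (fun _ => (1 : ℝ)) ω ∂μ = (μ s).toReal := by
    rw [integral_indicator_const (1 : ℝ) hsmeas]
    simp
    rfl
  -- s as a difference of sublevel sets
  have hseq : s = {ω | g (Z ω) ≤ a + 2*δ} \ {ω | g (Z ω) ≤ a - 2*δ - ε'} := by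
    ext ω
    simp only [hs, Set.mem_Ioc, Set.mem_setOf_eq, Set.mem_diff, not_le]
    tauto
  have hsub : {ω | g (Z ω) ≤ a - 2*δ - ε'} ⊆ {ω | g (Z ω) ≤ a + 2*δ} := by
    intro ω hω; simp only [Set.mem_setOf_eq] at *; linarith
  have hμs : μ s = μ {ω | g (Z ω) ≤ a + 2*δ} - μ {ω | g (Z ω) ≤ a - 2*δ - ε'} := by
    rw [hseq]
    exact measure_diff hsub (hAmeas _).nullMeasurableSet (measure_ne_top μ _)
  have hreal : (μ s).toReal = F (a + 2*δ) - F (a - 2*δ - ε') := by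
    rw [hμs, ENNReal.toReal_sub_of_le (measure_mono hsub) (measure_ne_top μ _),
      hF, hF]
  have hlip : F (a + 2*δ) - F (a - 2*δ - ε') ≤ 4 * C * δ + ε := by
    have := hLip (a + 2*δ) (a - 2*δ - ε')
    have habs : |a + 2*δ - (a - 2*δ - ε')| = 4*δ + ε' := by
      rw [abs_of_pos] <;> [ring; linarith]
    rw [habs] at this
    have hCε : C * ε' = ε := by rw [hε']; field_simp [hC.ne']
    calc F (a + 2*δ) - F (a - 2*δ - ε') ≤ |F (a + 2*δ) - F (a - 2*δ - ε')| :=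
          le_abs_self _
      _ ≤ C * (4*δ + ε') := this
      _ = 4 * C * δ + ε := by rw [mul_add, hCε]; ring
  calc _ ≤ (μ s).toReal := hle.trans_eq hind
    _ = F (a + 2*δ) - F (a - 2*δ - ε') := hreal
    _ ≤ 4 * C * δ + ε := hlip
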